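/- Let K be a convex body in ℂⁿ with 2 ≤ k < n, such that the Hermitian orthogonal projection of K onto every k-dimensional complex subspace is a complex ellipsoid of dimension k. Then K is a complex ellipsoid. -/

import Mathlib

def IsConvexBody {n : ℕ} (K : Set (EuclideanSpace ℂ (Fin n))) : Prop :=
  IsCompact K ∧ Convex ℝ K ∧ (interior K).Nonempty

def IsComplexEllipsoid {n : ℕ} (K : Set (EuclideanSpace ℂ (Fin n))) : Prop :=
  ∃ (L : EuclideanSpace ℂ (Fin n) ≃ₗ[ℂ] EuclideanSpace ℂ (Fin n))
    (b : EuclideanSpace ℂ (Fin n)),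
    K = (fun x => L x + b) '' Metric.closedBall 0 1

def IsEllipsoidOfDim {n : ℕ} (k : ℕ) (A : Set (EuclideanSpace ℂ (Fin n))) : Prop :=
  ∃ (f : EuclideanSpace ℂ (Fin k) →ₗ[ℂ] EuclideanSpace ℂ (Fin n))
    (b : EuclideanSpace ℂ (Fin n)), Function.Injective f ∧
    A = (fun x => f x + b) '' Metric.closedBall 0 1

open Module Submodule

section Aux

lemma stmt18_aux_ext {𝕜 M : Type*} [Field 𝕜] [AddCommGroup M] [Module 𝕜 M]
    [FiniteDimensional 𝕜 M]
    (j : ℕ) : ∀ W : Submodule 𝕜 M, finrank 𝕜 W + j ≤ finrank 𝕜 M →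
    ∃ V : Submodule 𝕜 M, W ≤ V ∧ finrank 𝕜 V = finrank 𝕜 W + j := by
  induction j with
  | zero => exact fun W _ => ⟨W, le_rfl, by simp⟩
  | succ j ih =>
    intro W hW
    obtain ⟨m, hm⟩ := W.exists_of_finrank_lt (by omega)
    have hm0 : m ≠ 0 := by
      intro h; exact hm 1 one_ne_zero (by simp [h])
    have hinf : W ⊓ (𝕜 ∙ m) = ⊥ := by
      rw [eq_bot_iff]
      rintro x ⟨hxW, hxm⟩
      obtain ⟨r, rfl⟩ := mem_span_singleton.mp hxm
      rcases eq_or_ne r 0 with rfl | hr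
      · simp
      · exact absurd hxW (hm r hr)
    have hfr : finrank 𝕜 ↥(W ⊔ (𝕜 ∙ m)) = finrank 𝕜 W + 1 := by
      have := Submodule.finrank_sup_add_finrank_inf_eq W (𝕜 ∙ m)
      rw [hinf] at this
      simp [finrank_span_singleton hm0, finrank_bot] at this
      omega
    obtain ⟨V, hV1, hV2⟩ := ih (W ⊔ (𝕜 ∙ m)) (by omega)
    exact ⟨V, le_trans le_sup_left hV1, by omega⟩

lemma stmt18_exists_mem_finrank {𝕜 M : Type*} [Field 𝕜] [AddCommGroup M] [Module 𝕜 M]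
    [FiniteDimensional 𝕜 M] (k : ℕ) (hk : 2 ≤ k) (hkn : k ≤ finrank 𝕜 M) (u v : M) :
    ∃ V : Submodule 𝕜 M, finrank 𝕜 V = k ∧ u ∈ V ∧ v ∈ V := by
  set W : Submodule 𝕜 M := span 𝕜 {u, v} with hWdef
  have hsing : ∀ x : M, finrank 𝕜 ↥(𝕜 ∙ x) ≤ 1 := by
    intro x
    rcases eq_or_ne x 0 with rfl | hx
    · rw [Submodule.span_zero_singleton]; simp
    · exact le_of_eq (finrank_span_singleton hx)
  have hW2 : finrank 𝕜 W ≤ 2 := by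
    have h1 : W = (𝕜 ∙ u) ⊔ (𝕜 ∙ v) := by
      rw [hWdef, ← span_union, Set.singleton_union]
    have h2 := Submodule.finrank_sup_add_finrank_inf_eq (𝕜 ∙ u) (𝕜 ∙ v)
    have := hsing u; have := hsing v
    rw [h1]; omega
  obtain ⟨V, hle, hfr⟩ := stmt18_aux_ext (k - finrank 𝕜 W) W (by omega)
  refine ⟨V, by omega, hle (subset_span (by simp)), hle (subset_span (by simp))⟩

lemma stmt18_isGreatest_ellipsoid {F G : Type*} [NormedAddCommGroup F]
    [InnerProductSpace ℂ F] [NormedAddCommGroup G] [InnerProductSpace ℂ G]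
    [FiniteDimensional ℂ F] [FiniteDimensional ℂ G] (f : F →L[ℂ] G) (b u : G) :
    IsGreatest ((fun y => (inner ℂ u y : ℂ).re) '' ((fun z => f z + b) '' Metric.closedBall 0 1))
      ((inner ℂ u b : ℂ).re + ‖ContinuousLinearMap.adjoint f u‖) := by
  set T := ContinuousLinearMap.adjoint f with hT
  have hkey : ∀ z, (inner ℂ u (f z + b) : ℂ).re = (inner ℂ (T u) z : ℂ).re + (inner ℂ u b : ℂ).re := by
    intro z
    rw [inner_add_right, ContinuousLinearMap.adjoint_inner_left]
    simp
  constructor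
  · rcases eq_or_ne (T u) 0 with h0 | h0
    · refine ⟨f 0 + b, ⟨0, by simp, rfl⟩, ?_⟩
      dsimp only
      rw [hkey 0, h0]
      simp
    · set z₀ : F := (‖T u‖⁻¹ : ℝ) • T u with hz₀
      have hnorm : ‖z₀‖ = 1 := by
        rw [hz₀, norm_smul]
        simp [norm_ne_zero_iff.mpr h0]
      refine ⟨f z₀ + b, ⟨z₀, by simp [hnorm], rfl⟩, ?_⟩
      dsimp only
      rw [hkey z₀, add_comm]
      congr 1
      rw [hz₀, RCLike.real_smul_eq_coe_smul (K := ℂ), inner_smul_right,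
        inner_self_eq_norm_sq_to_K]
      have hne : ‖T u‖ ≠ 0 := norm_ne_zero_iff.mpr h0
      simp only [Complex.ofReal_mul, Complex.mul_re, Complex.ofReal_re, Complex.ofReal_im]
      push_cast
      simp [pow_two]
      field_simp
  · rintro r ⟨y, ⟨z, hz, rfl⟩, rfl⟩
    dsimp only
    rw [hkey z]
    have h1 : (inner ℂ (T u) z : ℂ).re ≤ ‖T u‖ := by
      calc (inner ℂ (T u) z : ℂ).re ≤ ‖(inner ℂ (T u) z : ℂ)‖ := Complex.re_le_norm _
        _ ≤ ‖T u‖ * ‖z‖ := norm_inner_le_norm _ _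
        _ ≤ ‖T u‖ * 1 := by
            have : ‖z‖ ≤ 1 := by simpa using Metric.mem_closedBall.mp hz
            exact mul_le_mul_of_nonneg_left this (norm_nonneg _)
        _ = ‖T u‖ := mul_one _
    linarith

lemma stmt18_re_inner_eq_real_inner {n : ℕ} (w y : EuclideanSpace ℂ (Fin n)) :
    (inner ℂ w y : ℂ).re = (inner ℝ w y) := by
  rw [PiLp.inner_apply, PiLp.inner_apply, Complex.re_sum]
  rfl

lemma stmt18_riesz_re {n : ℕ} (φ : EuclideanSpace ℂ (Fin n) →L[ℝ] ℝ) :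
    ∃ w : EuclideanSpace ℂ (Fin n), ∀ y, φ y = (inner ℂ w y : ℂ).re := by
  refine ⟨(InnerProductSpace.toDual ℝ _).symm φ, fun y => ?_⟩
  rw [stmt18_re_inner_eq_real_inner, InnerProductSpace.toDual_symm_apply]

def GSyn {n : ℕ} (_g : EuclideanSpace ℂ (Fin n) → ℝ) : Type := EuclideanSpace ℂ (Fin n)

instance {n : ℕ} (g : EuclideanSpace ℂ (Fin n) → ℝ) : AddCommGroup (GSyn g) :=
  inferInstanceAs (AddCommGroup (EuclideanSpace ℂ (Fin n)))

noncomputable instance {n : ℕ} (g : EuclideanSpace ℂ (Fin n) → ℝ) : Module ℂ (GSyn g) :=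
  inferInstanceAs (Module ℂ (EuclideanSpace ℂ (Fin n)))

lemma stmt18_exists_linear_norm {n : ℕ} (g : EuclideanSpace ℂ (Fin n) → ℝ)
    (gdef : ∀ u, g u = 0 → u = 0)
    (gadd : ∀ u v, g (u + v) ≤ g u + g v)
    (gsmul : ∀ (z : ℂ) u, g (z • u) = ‖z‖ * g u)
    (gpar : ∀ u v, g (u + v) * g (u + v) + g (u - v) * g (u - v)
      = 2 * (g u * g u + g v * g v)) :
    ∃ S : EuclideanSpace ℂ (Fin n) ≃ₗ[ℂ] EuclideanSpace ℂ (Fin n), ∀ u, g u = ‖S u‖ := by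
  have gneg : ∀ u, g (-u) = g u := by
    intro u
    have := gsmul (-1) u
    simpa using this
  letI : NormedAddCommGroup (GSyn g) := AddGroupNorm.toNormedAddCommGroup
    { toFun := g
      map_zero' := by
        have := gsmul 0 0; simp at this; exact this
      add_le' := gadd
      neg' := gneg
      eq_zero_of_map_eq_zero' := fun x hx => gdef x hx }
  letI : NormedSpace ℂ (GSyn g) := { norm_smul_le := fun z u => le_of_eq (gsmul z u) }
  letI : InnerProductSpace ℂ (GSyn g) := InnerProductSpace.ofNorm (𝕜 := ℂ) gpar
  haveI : Module.Finite ℂ (GSyn g) :=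
    inferInstanceAs (Module.Finite ℂ (EuclideanSpace ℂ (Fin n)))
  have hfr : finrank ℂ (GSyn g) = n := by
    have : finrank ℂ (EuclideanSpace ℂ (Fin n)) = n := finrank_euclideanSpace_fin
    exact this
  let B := stdOrthonormalBasis ℂ (GSyn g)
  let e0 : GSyn g ≃ₗᵢ[ℂ] EuclideanSpace ℂ (Fin (finrank ℂ (GSyn g))) := B.repr
  let eq : Fin (finrank ℂ (GSyn g)) ≃ Fin n := finCongr hfr
  let e1 : EuclideanSpace ℂ (Fin (finrank ℂ (GSyn g))) ≃ₗᵢ[ℂ] EuclideanSpace ℂ (Fin n) :=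
    LinearIsometryEquiv.piLpCongrLeft 2 ℂ ℂ eq
  let e : GSyn g ≃ₗᵢ[ℂ] EuclideanSpace ℂ (Fin n) := e0.trans e1
  exact ⟨e.toLinearEquiv, fun u => (e.norm_map u).symm⟩

lemma stmt18_key_lemma {n k : ℕ} (K : Set (EuclideanSpace ℂ (Fin n)))
    (V : Submodule ℂ (EuclideanSpace ℂ (Fin n))) (hV : Module.finrank ℂ V = k)
    (hell : IsEllipsoidOfDim k
      ((fun x => (orthogonalProjection V x : EuclideanSpace ℂ (Fin n))) '' K)) :
    ∃ (c : EuclideanSpace ℂ (Fin n))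
      (T : EuclideanSpace ℂ (Fin n) →L[ℂ] EuclideanSpace ℂ (Fin k)),
      (∀ u ∈ V, IsGreatest ((fun x => (inner ℂ u x : ℂ).re) '' K)
        ((inner ℂ u c : ℂ).re + ‖T u‖)) ∧ (∀ u ∈ V, T u = 0 → u = 0) := by
  obtain ⟨f, b, hfinj, himg⟩ := hell
  set fc : EuclideanSpace ℂ (Fin k) →L[ℂ] EuclideanSpace ℂ (Fin n) :=
    LinearMap.toContinuousLinearMap f with hfc
  have hfc_app : ∀ z, fc z = f z := fun z => rfl
  refine ⟨b, ContinuousLinearMap.adjoint fc, ?_, ?_⟩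
  · intro u hu
    have himg2 : ((fun x => (inner ℂ u x : ℂ).re) '' K)
        = ((fun y => (inner ℂ u y : ℂ).re) '' ((fun z => fc z + b) '' Metric.closedBall 0 1)) := by
      rw [show ((fun z => fc z + b) '' Metric.closedBall 0 1)
          = ((fun x => (orthogonalProjection V x : EuclideanSpace ℂ (Fin n))) '' K) by
        rw [himg]; rfl]
      rw [Set.image_image]
      apply Set.image_congr
      intro x _
      have horth : x - (orthogonalProjection V x : EuclideanSpace ℂ (Fin n)) ∈ Vᗮ :=
        Submodule.sub_starProjection_mem_orthogonal (K := V) x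
      have h0 : (inner ℂ u (x - (orthogonalProjection V x : EuclideanSpace ℂ (Fin n))) : ℂ) = 0 :=
        Submodule.inner_right_of_mem_orthogonal hu horth
      rw [inner_sub_right] at h0
      have : (inner ℂ u x : ℂ) = inner ℂ u ((orthogonalProjection V x : EuclideanSpace ℂ (Fin n))) := by
        rw [← sub_eq_zero]; exact h0
      rw [this]
    rw [himg2]
    exact stmt18_isGreatest_ellipsoid fc b u
  · have hbV : b ∈ V := by
      have : b ∈ (fun x => (orthogonalProjection V x : EuclideanSpace ℂ (Fin n))) '' K := by
        rw [himg]
        exact ⟨0, Metric.mem_closedBall_self (by norm_num), by simp⟩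
      obtain ⟨x, _, hx⟩ := this
      rw [← hx]
      exact (orthogonalProjection V x).2
    have hrange : LinearMap.range f = V := by
      have hle : LinearMap.range f ≤ V := by
        rintro _ ⟨z, rfl⟩
        rcases eq_or_ne z 0 with rfl | hz
        · simp
        · have hz1 : ((‖z‖⁻¹ : ℝ) : ℂ) • z ∈
              Metric.closedBall (0 : EuclideanSpace ℂ (Fin k)) 1 := by
            simp only [Metric.mem_closedBall, dist_zero_right, norm_smul]
            rw [Complex.norm_real]
            simp [norm_ne_zero_iff.mpr hz, abs_of_nonneg (inv_nonneg.mpr (norm_nonneg z))]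
          have hmem : f (((‖z‖⁻¹ : ℝ) : ℂ) • z) + b ∈
              (fun x => (orthogonalProjection V x : EuclideanSpace ℂ (Fin n))) '' K := by
            rw [himg]; exact ⟨_, hz1, rfl⟩
          obtain ⟨x, _, hx⟩ := hmem
          have h1 : f (((‖z‖⁻¹ : ℝ) : ℂ) • z) + b ∈ V := by
            rw [← hx]; exact (orthogonalProjection V x).2
          have h2 : f (((‖z‖⁻¹ : ℝ) : ℂ) • z) ∈ V := by
            have := V.sub_mem h1 hbV; simpa using this
          have h3 : ((‖z‖ : ℝ) : ℂ) • f (((‖z‖⁻¹ : ℝ) : ℂ) • z) ∈ V := V.smul_mem _ h2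
          rwa [← map_smul, smul_smul, show ((‖z‖ : ℝ) : ℂ) * ((‖z‖⁻¹ : ℝ) : ℂ) = 1 by
            rw [← Complex.ofReal_mul]; rw [mul_inv_cancel₀ (norm_ne_zero_iff.mpr hz)]; simp,
            one_smul] at h3
      have hfr : finrank ℂ (LinearMap.range f) = k := by
        rw [LinearMap.finrank_range_of_inj hfinj]
        simp [finrank_euclideanSpace_fin]
      exact Submodule.eq_of_le_of_finrank_le hle (by rw [hfr, hV])
    intro u hu hTu
    have hperp : ∀ z, (inner ℂ u (f z) : ℂ) = 0 := by
      intro z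
      have := ContinuousLinearMap.adjoint_inner_left fc z u
      rw [hTu] at this
      simp only [inner_zero_left] at this
      rw [← hfc_app]
      exact this.symm
    obtain ⟨z₀, hz₀⟩ : ∃ z₀, f z₀ = u := by
      rw [← hrange] at hu; exact hu
    have h5 := hperp z₀
    rw [hz₀] at h5
    exact inner_self_eq_zero.mp h5

end Aux

section Main

theorem stmt18_main {nn kk : ℕ} (hk : 2 ≤ kk) (hkn : kk < nn)
    (K : Set (EuclideanSpace ℂ (Fin nn))) (hKc : IsCompact K) (hKconv : Convex ℝ K)
    (hproj : ∀ V : Submodule ℂ (EuclideanSpace ℂ (Fin nn)), Module.finrank ℂ V = kk →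
      IsEllipsoidOfDim kk ((fun x => (orthogonalProjection V x : (EuclideanSpace ℂ (Fin nn)))) '' K)) :
    IsComplexEllipsoid K := by
  have hkn' : kk ≤ finrank ℂ (EuclideanSpace ℂ (Fin nn)) := by
    rw [finrank_euclideanSpace_fin]; omega
  set img : (EuclideanSpace ℂ (Fin nn)) → Set ℝ := fun u => (fun x => (inner ℂ u x : ℂ).re) '' K with himgdef
  set h : (EuclideanSpace ℂ (Fin nn)) → ℝ := fun u => sSup (img u) with hh
  have pair : ∀ u v : (EuclideanSpace ℂ (Fin nn)), ∃ (c : (EuclideanSpace ℂ (Fin nn))) (T : (EuclideanSpace ℂ (Fin nn)) →L[ℂ] EuclideanSpace ℂ (Fin kk)),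
      ∀ w ∈ span ℂ ({u, v} : Set (EuclideanSpace ℂ (Fin nn))),
        IsGreatest (img w) ((inner ℂ w c : ℂ).re + ‖T w‖) ∧ (T w = 0 → w = 0) := by
    intro u v
    obtain ⟨V, hVfr, huV, hvV⟩ := stmt18_exists_mem_finrank kk hk hkn' u v
    obtain ⟨c, T, h1, h2⟩ := stmt18_key_lemma K V hVfr (hproj V hVfr)
    have hspan : span ℂ ({u, v} : Set (EuclideanSpace ℂ (Fin nn))) ≤ V := by
      rw [span_le]
      rintro w (rfl | rfl)
      · exact huV
      · exact hvV
    exact ⟨c, T, fun w hw => ⟨h1 w (hspan hw), h2 w (hspan hw)⟩⟩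
  set l : (EuclideanSpace ℂ (Fin nn)) → ℝ := fun u => (h u - h (-u)) / 2 with hl
  set g : (EuclideanSpace ℂ (Fin nn)) → ℝ := fun u => (h u + h (-u)) / 2 with hg
  have pair2 : ∀ u v : (EuclideanSpace ℂ (Fin nn)), ∃ (c : (EuclideanSpace ℂ (Fin nn))) (T : (EuclideanSpace ℂ (Fin nn)) →L[ℂ] EuclideanSpace ℂ (Fin kk)),
      ∀ w ∈ span ℂ ({u, v} : Set (EuclideanSpace ℂ (Fin nn))),
        l w = (inner ℂ w c : ℂ).re ∧ g w = ‖T w‖ ∧ (T w = 0 → w = 0)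
          ∧ IsGreatest (img w) (h w) := by
    intro u v
    obtain ⟨c, T, hp⟩ := pair u v
    refine ⟨c, T, fun w hw => ?_⟩
    have hw' : (-w) ∈ span ℂ ({u, v} : Set (EuclideanSpace ℂ (Fin nn))) := neg_mem hw
    have e1 : h w = (inner ℂ w c : ℂ).re + ‖T w‖ := ((hp w hw).1).csSup_eq
    have e2 : h (-w) = (inner ℂ (-w) c : ℂ).re + ‖T (-w)‖ := ((hp _ hw').1).csSup_eq
    rw [inner_neg_left, Complex.neg_re, map_neg, norm_neg] at e2
    refine ⟨by rw [hl]; dsimp only; rw [e1, e2]; ring,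
      by rw [hg]; dsimp only; rw [e1, e2]; ring, (hp w hw).2, ?_⟩
    have h3 : h w = (inner ℂ w c : ℂ).re + ‖T w‖ := e1
    rw [h3]
    exact (hp w hw).1
  have humem : ∀ u : (EuclideanSpace ℂ (Fin nn)), u ∈ span ℂ ({u, u} : Set (EuclideanSpace ℂ (Fin nn))) :=
    fun u => subset_span (Set.mem_insert u _)
  have gdef : ∀ u, g u = 0 → u = 0 := by
    intro u hu
    obtain ⟨c, T, hp⟩ := pair2 u u
    obtain ⟨_, hgw, hnd, _⟩ := hp u (humem u)
    exact hnd (norm_eq_zero.mp (by rw [← hgw]; exact hu))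
  have gadd : ∀ u v, g (u + v) ≤ g u + g v := by
    intro u v
    obtain ⟨c, T, hp⟩ := pair2 u v
    have hu : u ∈ span ℂ ({u, v} : Set (EuclideanSpace ℂ (Fin nn))) := subset_span (Set.mem_insert u _)
    have hv : v ∈ span ℂ ({u, v} : Set (EuclideanSpace ℂ (Fin nn))) := subset_span (Set.mem_insert_of_mem u rfl)
    have huv : u + v ∈ span ℂ ({u, v} : Set (EuclideanSpace ℂ (Fin nn))) := add_mem hu hv
    rw [(hp u hu).2.1, (hp v hv).2.1, (hp _ huv).2.1, map_add]
    exact norm_add_le _ _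
  have gsmul : ∀ (z : ℂ) (u : (EuclideanSpace ℂ (Fin nn))), g (z • u) = ‖z‖ * g u := by
    intro z u
    obtain ⟨c, T, hp⟩ := pair2 u u
    have hu := humem u
    have hzu : z • u ∈ span ℂ ({u, u} : Set (EuclideanSpace ℂ (Fin nn))) := smul_mem _ z hu
    rw [(hp u hu).2.1, (hp _ hzu).2.1, map_smul, norm_smul]
  have gpar : ∀ u v, g (u + v) * g (u + v) + g (u - v) * g (u - v)
      = 2 * (g u * g u + g v * g v) := by
    intro u v
    obtain ⟨c, T, hp⟩ := pair2 u v
    have hu : u ∈ span ℂ ({u, v} : Set (EuclideanSpace ℂ (Fin nn))) := subset_span (Set.mem_insert u _)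
    have hv : v ∈ span ℂ ({u, v} : Set (EuclideanSpace ℂ (Fin nn))) := subset_span (Set.mem_insert_of_mem u rfl)
    have huv : u + v ∈ span ℂ ({u, v} : Set (EuclideanSpace ℂ (Fin nn))) := add_mem hu hv
    have huv' : u - v ∈ span ℂ ({u, v} : Set (EuclideanSpace ℂ (Fin nn))) := sub_mem hu hv
    rw [(hp u hu).2.1, (hp v hv).2.1, (hp _ huv).2.1, (hp _ huv').2.1, map_add, map_sub]
    have := parallelogram_law_with_norm ℂ (T u) (T v); simp only [sq] at this; exact this
  obtain ⟨S, hS⟩ := stmt18_exists_linear_norm g gdef gadd gsmul gpar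
  haveI : FiniteDimensional ℝ (EuclideanSpace ℂ (Fin nn)) := Module.Finite.trans (R := ℝ) ℂ (EuclideanSpace ℂ (Fin nn))
  have ladd : ∀ u v : (EuclideanSpace ℂ (Fin nn)), l (u + v) = l u + l v := by
    intro u v
    obtain ⟨c, T, hp⟩ := pair2 u v
    have hu : u ∈ span ℂ ({u, v} : Set (EuclideanSpace ℂ (Fin nn))) := subset_span (Set.mem_insert u _)
    have hv : v ∈ span ℂ ({u, v} : Set (EuclideanSpace ℂ (Fin nn))) := subset_span (Set.mem_insert_of_mem u rfl)
    have huv : u + v ∈ span ℂ ({u, v} : Set (EuclideanSpace ℂ (Fin nn))) := add_mem hu hv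
    rw [(hp u hu).1, (hp v hv).1, (hp _ huv).1, inner_add_left, Complex.add_re]
  have lsmul : ∀ (r : ℝ) (u : (EuclideanSpace ℂ (Fin nn))), l (r • u) = r * l u := by
    intro r u
    obtain ⟨c, T, hp⟩ := pair2 u u
    have hu := humem u
    have hru : r • u ∈ span ℂ ({u, u} : Set (EuclideanSpace ℂ (Fin nn))) := by
      rw [RCLike.real_smul_eq_coe_smul (K := ℂ)]
      exact smul_mem _ _ hu
    rw [(hp _ hru).1, (hp u hu).1, RCLike.real_smul_eq_coe_smul (K := ℂ) r u,
      inner_smul_left]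
    rw [RCLike.conj_ofReal]
    simp [Complex.mul_re]
  set lmap : (EuclideanSpace ℂ (Fin nn)) →ₗ[ℝ] ℝ :=
    { toFun := l
      map_add' := ladd
      map_smul' := fun r u => lsmul r u } with hlmap
  set φ : (EuclideanSpace ℂ (Fin nn)) →L[ℝ] ℝ := LinearMap.toContinuousLinearMap lmap with hφ
  obtain ⟨c, hc⟩ := stmt18_riesz_re φ
  have hlrep : ∀ u, l u = (inner ℂ u c : ℂ).re := by
    intro u
    have h1 : φ u = l u := rfl
    have h2 : (inner ℂ u c : ℂ) = (starRingEnd ℂ) (inner ℂ c u : ℂ) := (inner_conj_symm _ _).symm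
    rw [← h1, hc u, h2, Complex.conj_re]
  have hglob : ∀ u : (EuclideanSpace ℂ (Fin nn)), IsGreatest (img u) ((inner ℂ u c : ℂ).re + ‖S u‖) := by
    intro u
    obtain ⟨c', T, hp⟩ := pair2 u u
    obtain ⟨_, _, _, hgr⟩ := hp u (humem u)
    have h1 : h u = (inner ℂ u c : ℂ).re + ‖S u‖ := by
      have h2 : h u = l u + g u := by rw [hl, hg]; ring
      rw [h2, hlrep u, hS u]
    rw [← h1]
    exact hgr
  set Scont : (EuclideanSpace ℂ (Fin nn)) →L[ℂ] (EuclideanSpace ℂ (Fin nn)) := LinearMap.toContinuousLinearMap (S : (EuclideanSpace ℂ (Fin nn)) →ₗ[ℂ] (EuclideanSpace ℂ (Fin nn))) with hScont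
  have hScont_app : ∀ u, Scont u = S u := fun u => rfl
  set A : (EuclideanSpace ℂ (Fin nn)) →L[ℂ] (EuclideanSpace ℂ (Fin nn)) := ContinuousLinearMap.adjoint Scont with hA
  have hadjA : ∀ u, ‖ContinuousLinearMap.adjoint A u‖ = ‖S u‖ := by
    intro u
    rw [hA, ContinuousLinearMap.adjoint_adjoint]
    rfl
  have hAzero : ∀ w : (EuclideanSpace ℂ (Fin nn)), A w = 0 → w = 0 := by
    intro w hw
    have h1 : ∀ x, (inner ℂ w (Scont x) : ℂ) = 0 := by
      intro x
      have h2 := ContinuousLinearMap.adjoint_inner_left Scont x w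
      rw [← hA] at h2
      rw [← h2, hw, inner_zero_left]
    have h2 := h1 (S.symm w)
    rw [hScont_app, S.apply_symm_apply] at h2
    exact inner_self_eq_zero.mp h2
  have hAbij : Function.Bijective A := by
    have hinj : Function.Injective A := by
      intro a b hab
      have h1 : A (a - b) = 0 := by rw [map_sub, hab, sub_self]
      have h2 := hAzero _ h1
      rwa [sub_eq_zero] at h2
    exact ⟨hinj, (LinearMap.injective_iff_surjective (f := (A : (EuclideanSpace ℂ (Fin nn)) →ₗ[ℂ] (EuclideanSpace ℂ (Fin nn))))).mp hinj⟩
  set L : (EuclideanSpace ℂ (Fin nn)) ≃ₗ[ℂ] (EuclideanSpace ℂ (Fin nn)) := LinearEquiv.ofBijective (A : (EuclideanSpace ℂ (Fin nn)) →ₗ[ℂ] (EuclideanSpace ℂ (Fin nn))) hAbij with hL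
  set Ell : Set (EuclideanSpace ℂ (Fin nn)) := (fun x => L x + c) '' Metric.closedBall 0 1 with hEll
  have hEllA : Ell = (fun z => A z + c) '' Metric.closedBall 0 1 := rfl
  have hEllGreatest : ∀ u : (EuclideanSpace ℂ (Fin nn)), IsGreatest ((fun y => (inner ℂ u y : ℂ).re) '' Ell)
      ((inner ℂ u c : ℂ).re + ‖S u‖) := by
    intro u
    have h1 := stmt18_isGreatest_ellipsoid A c u
    rw [hadjA u] at h1
    rw [hEllA]
    exact h1
  have hEllcomp : IsCompact Ell := by
    rw [hEllA]
    exact ((isCompact_closedBall 0 1).image (A.continuous.add continuous_const))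
  have hEllconv : Convex ℝ Ell := by
    rw [hEllA]
    rintro _ ⟨z1, h1, rfl⟩ _ ⟨z2, h2, rfl⟩ a b ha hb hab
    refine ⟨a • z1 + b • z2, convex_closedBall (0 : (EuclideanSpace ℂ (Fin nn))) 1 h1 h2 ha hb hab, ?_⟩
    have hmap : A (a • z1 + b • z2) = a • A z1 + b • A z2 := by
      rw [map_add, RCLike.real_smul_eq_coe_smul (K := ℂ) a z1,
        RCLike.real_smul_eq_coe_smul (K := ℂ) b z2, map_smul, map_smul,
        ← RCLike.real_smul_eq_coe_smul (K := ℂ) a (A z1),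
        ← RCLike.real_smul_eq_coe_smul (K := ℂ) b (A z2)]
    dsimp only
    rw [hmap]
    have h3 : a • (A z1 + c) + b • (A z2 + c) = (a • A z1 + b • A z2) + (a + b) • c := by
      module
    rw [h3, hab, one_smul]
  have hsub1 : K ⊆ Ell := by
    intro x hx
    by_contra hxE
    obtain ⟨φ', s, hφ1, hφ2⟩ := geometric_hahn_banach_closed_point hEllconv
      hEllcomp.isClosed hxE
    obtain ⟨w, hw⟩ := stmt18_riesz_re φ'
    have hub : φ' x ≤ (inner ℂ w c : ℂ).re + ‖S w‖ := by
      rw [hw x]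
      exact (hglob w).2 ⟨x, hx, rfl⟩
    obtain ⟨y₀, hy₀, hval⟩ := (hEllGreatest w).1
    have h1 : φ' y₀ = (inner ℂ w c : ℂ).re + ‖S w‖ := by rw [hw y₀]; exact hval
    have h2 := hφ1 y₀ hy₀
    linarith
  have hsub2 : Ell ⊆ K := by
    intro y hy
    by_contra hyK
    obtain ⟨φ', s, hφ1, hφ2⟩ := geometric_hahn_banach_closed_point hKconv
      hKc.isClosed hyK
    obtain ⟨w, hw⟩ := stmt18_riesz_re φ'
    have hub : φ' y ≤ (inner ℂ w c : ℂ).re + ‖S w‖ := by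
      rw [hw y]
      exact (hEllGreatest w).2 ⟨y, hy, rfl⟩
    obtain ⟨x₀, hx₀, hval⟩ := (hglob w).1
    have h1 : φ' x₀ = (inner ℂ w c : ℂ).re + ‖S w‖ := by rw [hw x₀]; exact hval
    have h2 := hφ1 x₀ hx₀
    linarith
  exact ⟨L, c, le_antisymm hsub1 hsub2⟩

end Main

theorem stmt18 {n k : ℕ} (hk : 2 ≤ k) (hkn : k < n)
    (K : Set (EuclideanSpace ℂ (Fin n))) (hK : IsConvexBody K)
    (hproj : ∀ V : Submodule ℂ (EuclideanSpace ℂ (Fin n)), Module.finrank ℂ V = k →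
      IsEllipsoidOfDim k
        ((fun x => (orthogonalProjection V x : EuclideanSpace ℂ (Fin n))) '' K)) :
    IsComplexEllipsoid K :=
  stmt18_main hk hkn K hK.1 hK.2.1 hproj
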